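/- Let G be a properly edge-coloured graph, P a rainbow path with at least 2b + 1 vertices, S the set of the first b vertices of P, T the set of the last b vertices of P, and H a subgraph of G vertex-compatible with G such that no colour of H appears on P and there are at least b + 1 edges of H between S and T. Then some edge e of H between S and T, together with the subpath of P between the endpoints of e, forms a rainbow cycle of length at least |P| - 2b + 1, where |P| is the number of edges of P. -/

import Mathlib

def IsProperEdgeColoring {V C : Type*} (G : SimpleGraph V) (c : Sym2 V → C) : Prop :=
  ∀ e ∈ G.edgeSet, ∀ f ∈ G.edgeSet, e ≠ f → (∃ v, v ∈ e ∧ v ∈ f) → c e ≠ c f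

open SimpleGraph

/-- If `x` is among the first `b` vertices of a path, `takeUntil x` is short. -/
lemma aux_takeUntil_lt {V : Type*} [DecidableEq V] {G : SimpleGraph V} {x v w : V}
    (p : G.Walk v w) (hp : p.IsPath) (h : x ∈ p.support) {b : ℕ}
    (hx : x ∈ p.support.take b) : (p.takeUntil x h).length < b := by
  by_contra hlt
  push_neg at hlt
  set q := p.takeUntil x h with hq
  have hqc : q.support = q.reverse.support.tail.reverse ++ [x] := by
    have := q.reverse.support_eq_cons
    rw [Walk.support_reverse] at this
    rw [← List.reverse_reverse q.support, this]
    simp [Walk.support_reverse]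
  have hT : q.reverse.support.tail.reverse.length = q.length := by
    simp [Walk.support_reverse, Walk.length_support]
  have hsp : p.support = q.support ++ (p.dropUntil x h).support.tail := by
    rw [← Walk.support_append, Walk.take_spec]
  have htake : p.support.take b = q.support.take b := by
    rw [hsp, List.take_append_of_le_length (by rw [Walk.length_support]; omega)]
  rw [htake, hqc, List.take_append_of_le_length (by omega)] at hx
  have hx' : x ∈ q.reverse.support.tail.reverse := List.take_subset _ _ hx
  have hnd : q.support.Nodup := (hp.takeUntil h).support_nodup
  rw [hqc] at hnd
  have := List.disjoint_of_nodup_append hnd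
  exact this hx' (List.mem_singleton_self x)

/-- If `x` is among the last `b` vertices of a path, `dropUntil x` is short. -/
lemma aux_dropUntil_lt {V : Type*} [DecidableEq V] {G : SimpleGraph V} {x v w : V}
    (p : G.Walk v w) (hp : p.IsPath) (h : x ∈ p.support) {b : ℕ}
    (hx : x ∈ p.support.reverse.take b) : (p.dropUntil x h).length < b := by
  by_contra hlt
  push_neg at hlt
  set r := p.dropUntil x h with hr
  have hrc : r.support = x :: r.support.tail := r.support_eq_cons
  have hsp : p.support = (p.takeUntil x h).support ++ r.support.tail := by
    rw [← Walk.support_append, Walk.take_spec]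
  have hTlen : r.support.tail.length = r.length := by
    have := congrArg List.length hrc
    have := r.length_support
    simp only [List.length_cons] at *
    omega
  have htake : p.support.reverse.take b = r.support.tail.reverse.take b := by
    rw [hsp, List.reverse_append, List.take_append_of_le_length (by simp; omega)]
  rw [htake] at hx
  have hx' : x ∈ r.support.tail := by
    have := List.take_subset b r.support.tail.reverse hx
    simpa using this
  have hnd : r.support.Nodup := (hp.dropUntil h).support_nodup
  rw [hrc] at hnd
  exact (List.nodup_cons.mp hnd).1 hx'

/-- Closing a long rainbow path into a long rainbow cycle: if `P` is a rainbow path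
with at least `2b+1` vertices, `S` and `T` are the sets of its first and last `b`
vertices, and `H` is a subgraph of `G` with no colour on `P` and at least `b+1`
edges between `S` and `T`, then some edge of `H` between `S` and `T` together with
the corresponding subpath of `P` forms a rainbow cycle of length at least
`|P| - 2b + 1`. -/
theorem stmt15 {V : Type*} [Fintype V] [DecidableEq V]
    (G : SimpleGraph V) (C : Type*) (c : Sym2 V → C)
    (hc : IsProperEdgeColoring G c)
    (b : ℕ) (hb : 0 < b)
    (u v : V) (p : G.Walk u v) (hp : p.IsPath) (hrb : (p.edges.map c).Nodup)
    (hlong : 2 * b + 1 ≤ p.support.length)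
    (H : SimpleGraph V) [DecidableRel H.Adj] (hHG : H ≤ G)
    (hcol : ∀ e ∈ H.edgeSet, ∀ f ∈ p.edges, c e ≠ c f)
    (hST : b + 1 ≤
      (H.interedges (p.support.take b).toFinset (p.support.reverse.take b).toFinset).card) :
    ∃ s t : V, H.Adj s t ∧ s ∈ (p.support.take b).toFinset ∧
      t ∈ (p.support.reverse.take b).toFinset ∧
      ∃ q : G.Walk t t, q.IsCycle ∧ (q.edges.map c).Nodup ∧
        s(s, t) ∈ q.edges ∧ q.edges ⊆ s(s, t) :: p.edges ∧
        (p.length : ℤ) - 2 * b + 1 ≤ (q.length : ℤ) := by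
  have hne : (H.interedges (p.support.take b).toFinset
      (p.support.reverse.take b).toFinset).Nonempty :=
    Finset.card_pos.mp (by omega)
  obtain ⟨⟨s, t⟩, hst⟩ := hne
  rw [SimpleGraph.mem_interedges_iff] at hst
  obtain ⟨hsS, htT, hadj⟩ := hst
  refine ⟨s, t, hadj, hsS, htT, ?_⟩
  have hsS' : s ∈ p.support.take b := by simpa using hsS
  have htT' : t ∈ p.support.reverse.take b := by simpa using htT
  have hs : s ∈ p.support := List.take_subset _ _ hsS'
  have hplen : p.support.length = p.length + 1 := p.length_support
  set A := p.takeUntil s hs with hA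
  set D := p.dropUntil s hs with hD
  have hAlt : A.length < b := aux_takeUntil_lt p hp hs hsS'
  have hsplit : A.append D = p := p.take_spec hs
  have hlen1 : A.length + D.length = p.length := by
    rw [← hsplit]; exact (Walk.length_append _ _).symm
  have hDpath : D.IsPath := hp.dropUntil hs
  have hDsup : p.support = A.support ++ D.support.tail := by
    rw [← Walk.support_append, hsplit]
  have hDtail : D.support.tail.length = D.length := by
    have h1 := congrArg List.length D.support_eq_cons
    have h2 := D.length_support
    simp only [List.length_cons] at h1
    omega
  have hbD : b ≤ D.length := by omega
  have h1 : p.support.reverse.take b = D.support.tail.reverse.take b := by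
    rw [hDsup, List.reverse_append,
      List.take_append_of_le_length (by rw [List.length_reverse, hDtail]; omega)]
  have h2 : D.support.reverse.take b = D.support.tail.reverse.take b := by
    conv_lhs => rw [D.support_eq_cons]
    rw [List.reverse_cons,
      List.take_append_of_le_length (by rw [List.length_reverse, hDtail]; omega)]
  have htD' : t ∈ D.support.reverse.take b := by rw [h2, ← h1]; exact htT'
  have htD : t ∈ D.support := by
    exact List.mem_reverse.mp (List.take_subset _ _ htD')
  set Q := D.takeUntil t htD with hQ
  set R := D.dropUntil t htD with hR
  have hRlt : R.length < b := aux_dropUntil_lt D hDpath htD htD'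
  have hsplit2 : Q.append R = D := D.take_spec htD
  have hlen2 : Q.length + R.length = D.length := by
    rw [← hsplit2]; exact (Walk.length_append _ _).symm
  have hQpath : Q.IsPath := hDpath.takeUntil htD
  have hDe : p.edges = A.edges ++ D.edges := by rw [← hsplit, Walk.edges_append]
  have hQe : D.edges = Q.edges ++ R.edges := by rw [← hsplit2, Walk.edges_append]
  have hQsub : List.Sublist Q.edges p.edges := by
    rw [hDe, hQe]
    exact (List.sublist_append_left _ _).trans (List.sublist_append_right _ _)
  have hQsub' : Q.edges ⊆ p.edges := hQsub.subset
  have hHedge : s(s, t) ∈ H.edgeSet := hadj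
  have hGts : G.Adj t s := (hHG hadj).symm
  have hcst : ∀ f ∈ p.edges, c s(s, t) ≠ c f := hcol _ hHedge
  have hstnp : s(s, t) ∉ p.edges := fun hmem => hcst _ hmem rfl
  have hts_eq : s(t, s) = s(s, t) := Sym2.eq_swap
  have hQnotst : s(t, s) ∉ Q.edges := by
    rw [hts_eq]; exact fun hmm => hstnp (hQsub' hmm)
  refine ⟨Walk.cons hGts Q, ?_, ?_, ?_, ?_, ?_⟩
  · exact (Walk.cons_isCycle_iff Q hGts).mpr ⟨hQpath, hQnotst⟩
  · rw [Walk.edges_cons, List.map_cons, List.nodup_cons]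
    refine ⟨?_, hrb.sublist (hQsub.map c)⟩
    intro hmem
    obtain ⟨f, hf, hfe⟩ := List.mem_map.mp hmem
    exact hcst f (hQsub' hf) ((hfe.trans (congrArg c hts_eq)).symm)
  · rw [Walk.edges_cons, hts_eq]
    exact List.mem_cons_self
  · intro e he
    rw [Walk.edges_cons] at he
    rcases List.mem_cons.mp he with rfl | he'
    · rw [hts_eq]; exact List.mem_cons_self
    · exact List.mem_cons_of_mem _ (hQsub' he')
  · rw [Walk.length_cons]
    push_cast
    omega
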